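/- Let N be a symmetric positive definite (d-1)×(d-1) matrix and a ∈ ℝ^{d-1}, and define the symmetric d×d matrix M = [[1, a'],[a, aa' - N]]. Then M has exactly one positive eigenvalue and d-1 negative eigenvalues; moreover λ_max(M) ≥ 1, and (with eigenvalues of M in nondecreasing order λ₁(M) ≤ ... ≤ λ_d(M) and eigenvalues of N in nondecreasing order) λ_{i+1}(M) ≥ -λ_{d-i}(N) for i = 1,...,d-1, so that -λ_{d-i+1}(M)/λ_d(M) ≤ λ_i(N) for each i = 1,...,d-1. -/

import Mathlib

open Matrix

section Aux

lemma sum_dot {ι κ} [Fintype ι] (s : Finset κ) (f : κ → ι → ℝ) (w : ι → ℝ) :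
    (∑ i ∈ s, f i) ⬝ᵥ w = ∑ i ∈ s, f i ⬝ᵥ w := by
  simp only [dotProduct, Finset.sum_apply, Finset.sum_mul]
  exact Finset.sum_comm

lemma dot_sum {ι κ} [Fintype ι] (s : Finset κ) (f : κ → ι → ℝ) (w : ι → ℝ) :
    w ⬝ᵥ (∑ i ∈ s, f i) = ∑ i ∈ s, w ⬝ᵥ f i := by
  simp only [dotProduct, Finset.sum_apply, Finset.mul_sum]
  exact Finset.sum_comm

lemma mulVec_sum' {ι κ} [Fintype ι] (A : Matrix ι ι ℝ) (s : Finset κ) (f : κ → ι → ℝ) :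
    A *ᵥ (∑ i ∈ s, f i) = ∑ i ∈ s, A *ᵥ f i := by
  ext j
  simp only [mulVec, Finset.sum_apply, dot_sum]

lemma dot_self_nonneg {ι} [Fintype ι] (v : ι → ℝ) : 0 ≤ v ⬝ᵥ v :=
  Finset.sum_nonneg fun _ _ => mul_self_nonneg _

lemma dot_self_pos {ι} [Fintype ι] {v : ι → ℝ} (hv : v ≠ 0) : 0 < v ⬝ᵥ v :=
  lt_of_le_of_ne (dot_self_nonneg v) fun h => hv (dotProduct_self_eq_zero.mp h.symm)

lemma eigvec_dot {ι} [Fintype ι] [DecidableEq ι] {A : Matrix ι ι ℝ} (hA : A.IsHermitian)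
    (i j : ι) :
    ⇑(hA.eigenvectorBasis i) ⬝ᵥ ⇑(hA.eigenvectorBasis j) = if i = j then 1 else 0 := by
  have h := hA.eigenvectorBasis.orthonormal
  rw [orthonormal_iff_ite] at h
  rw [← h i j]
  simp [PiLp.inner_apply, dotProduct, RCLike.inner_apply]
  exact Finset.sum_congr rfl fun _ _ => mul_comm _ _

lemma spec_decomp {ι} [Fintype ι] [DecidableEq ι] {A : Matrix ι ι ℝ} (hA : A.IsHermitian)
    (p : ι → Prop) [DecidablePred p] (x : ι → ℝ)
    (hx : x ∈ Submodule.span ℝ (Set.range fun i : {i // p i} => ⇑(hA.eigenvectorBasis i.1))) :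
    ∃ c : {i // p i} → ℝ,
      x ⬝ᵥ x = ∑ i, (c i)^2 ∧ x ⬝ᵥ A *ᵥ x = ∑ i, hA.eigenvalues i.1 * (c i)^2 := by
  rw [Submodule.mem_span_range_iff_exists_fun] at hx
  obtain ⟨c, hc⟩ := hx
  have key : ∀ (g : {i // p i} → ℝ),
      x ⬝ᵥ (∑ i : {i // p i}, g i • ⇑(hA.eigenvectorBasis i.1)) = ∑ i, g i * c i := by
    intro g
    rw [dot_sum]
    refine Finset.sum_congr rfl fun i _ => ?_
    rw [← hc, sum_dot, Finset.sum_eq_single i]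
    · rw [smul_dotProduct, dotProduct_smul, eigvec_dot hA]
      simp; ring
    · intro j _ hj
      rw [smul_dotProduct, dotProduct_smul, eigvec_dot hA,
        if_neg (fun h => hj (Subtype.ext h))]
      simp
    · simp
  constructor
  case w => exact c
  constructor
  · have h := key c
    rw [hc] at h
    rw [h]
    exact Finset.sum_congr rfl fun i _ => by ring
  · have hAx : A *ᵥ x
        = ∑ i : {i // p i}, (c i * hA.eigenvalues i.1) • ⇑(hA.eigenvectorBasis i.1) := by
      rw [← hc, mulVec_sum']
      refine Finset.sum_congr rfl fun i _ => ?_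
      rw [mulVec_smul, hA.mulVec_eigenvectorBasis, smul_smul, mul_comm]
    rw [hAx, key]
    exact Finset.sum_congr rfl fun i _ => by ring

lemma finrank_span_eig {ι} [Fintype ι] [DecidableEq ι] {A : Matrix ι ι ℝ} (hA : A.IsHermitian)
    (p : ι → Prop) [DecidablePred p] :
    Module.finrank ℝ (Submodule.span ℝ
      (Set.range fun i : {i // p i} => ⇑(hA.eigenvectorBasis i.1))) =
    Fintype.card {i // p i} := by
  refine finrank_span_eq_card ?_
  rw [Fintype.linearIndependent_iff]
  intro g hg j
  have h := congrArg (fun w => w ⬝ᵥ ⇑(hA.eigenvectorBasis j.1)) hg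
  simp only [sum_dot, smul_dotProduct, eigvec_dot hA, zero_dotProduct] at h
  rw [Finset.sum_eq_single j] at h
  · simpa using h
  · intro b _ hb
    rw [if_neg (fun h' => hb (Subtype.ext h'))]
    simp
  · simp

lemma dim_count {ι} [Fintype ι] (V W : Submodule ℝ (ι → ℝ))
    (h : ∀ x, x ∈ V → x ∈ W → x = 0) :
    Module.finrank ℝ V + Module.finrank ℝ W ≤ Fintype.card ι := by
  have hVW : V ⊓ W = ⊥ := by
    rw [eq_bot_iff]
    intro x hx
    exact (Submodule.mem_bot ℝ).mpr (h x hx.1 hx.2)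
  have h2 := Submodule.finrank_sup_add_finrank_inf_eq V W
  rw [hVW] at h2
  simp only [finrank_bot, add_zero] at h2
  calc Module.finrank ℝ V + Module.finrank ℝ W = Module.finrank ℝ ↥(V ⊔ W) := h2.symm
    _ ≤ Module.finrank ℝ (ι → ℝ) := Submodule.finrank_le _
    _ = Fintype.card ι := by simp

lemma card_le_fin {m : ℕ} (j : Fin m) : Fintype.card {k : Fin m // k ≤ j} = (j : ℕ) + 1 := by
  have e : {k : Fin m // k ≤ j} ≃ Fin ((j : ℕ) + 1) :=
    { toFun := fun k => ⟨k.1.1, by have := Fin.le_def.mp k.2; omega⟩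
      invFun := fun l => ⟨⟨l.1, by have := l.2; omega⟩, by
        rw [Fin.le_def]; have := l.2; simp; omega⟩
      left_inv := fun k => by ext; rfl
      right_inv := fun l => by ext; rfl }
  rw [Fintype.card_congr e, Fintype.card_fin]

lemma card_ge_fin {m : ℕ} (j : Fin m) : Fintype.card {k : Fin m // j ≤ k} = m - (j : ℕ) := by
  have e : {k : Fin m // j ≤ k} ≃ Fin (m - (j : ℕ)) :=
    { toFun := fun k => ⟨k.1.1 - j.1, by have := Fin.le_def.mp k.2; have := k.1.2; omega⟩
      invFun := fun l => ⟨⟨l.1 + j.1, by have := l.2; omega⟩, by rw [Fin.le_def]; simp⟩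
      left_inv := fun k => by ext; have := Fin.le_def.mp k.2; simp; omega
      right_inv := fun l => by ext; simp }
  rw [Fintype.card_congr e, Fintype.card_fin]

lemma card_sub {ι} [Fintype ι] {m : ℕ} (e : ι ≃ Fin m) (p : Fin m → Prop) [DecidablePred p] :
    Fintype.card {i : ι // p (e i)} = Fintype.card {k : Fin m // p k} :=
  Fintype.card_congr (e.subtypeEquiv fun _ => Iff.rfl)

lemma eig_ge {ι} [Fintype ι] [DecidableEq ι] {A : Matrix ι ι ℝ} (hA : A.IsHermitian)
    {m : ℕ} (hcard : Fintype.card ι = m) (μ : Fin m → ℝ) (hmono : Monotone μ)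
    (e : ι ≃ Fin m) (he : ∀ i, μ (e i) = hA.eigenvalues i)
    (V : Submodule ℝ (ι → ℝ)) (c : ℝ)
    (hV : ∀ x ∈ V, c * (x ⬝ᵥ x) ≤ x ⬝ᵥ A *ᵥ x)
    (k : Fin m) (hk : m ≤ Module.finrank ℝ V + (k : ℕ)) :
    c ≤ μ k := by
  by_contra hlt
  push_neg at hlt
  set W := Submodule.span ℝ
      (Set.range fun i : {i // e i ≤ k} => ⇑(hA.eigenvectorBasis i.1)) with hW
  have hWrank : Module.finrank ℝ W = (k : ℕ) + 1 := by
    rw [hW, finrank_span_eig hA, card_sub e (· ≤ k), card_le_fin]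
  have hdisj : ∀ x, x ∈ V → x ∈ W → x = 0 := by
    intro x hxV hxW
    by_contra hx0
    obtain ⟨co, hd, hq⟩ := spec_decomp hA (fun i => e i ≤ k) x hxW
    have hqle : x ⬝ᵥ A *ᵥ x ≤ μ k * (x ⬝ᵥ x) := by
      rw [hq, hd, Finset.mul_sum]
      refine Finset.sum_le_sum fun i _ => ?_
      have h1 : hA.eigenvalues i.1 ≤ μ k := by
        rw [← he]; exact hmono i.2
      exact mul_le_mul_of_nonneg_right h1 (sq_nonneg _)
    have h1 := hV x hxV
    have h2 : μ k * (x ⬝ᵥ x) < c * (x ⬝ᵥ x) :=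
      mul_lt_mul_of_pos_right hlt (dot_self_pos hx0)
    linarith
  have h := dim_count V W hdisj
  rw [hWrank, hcard] at h
  omega

lemma eig_lt {ι} [Fintype ι] [DecidableEq ι] {A : Matrix ι ι ℝ} (hA : A.IsHermitian)
    {m : ℕ} (hcard : Fintype.card ι = m) (μ : Fin m → ℝ) (hmono : Monotone μ)
    (e : ι ≃ Fin m) (he : ∀ i, μ (e i) = hA.eigenvalues i)
    (V : Submodule ℝ (ι → ℝ)) (c : ℝ)
    (hV : ∀ x ∈ V, x ≠ 0 → x ⬝ᵥ A *ᵥ x < c * (x ⬝ᵥ x))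
    (k : Fin m) (hk : (k : ℕ) < Module.finrank ℝ V) :
    μ k < c := by
  by_contra hge
  push_neg at hge
  set W := Submodule.span ℝ
      (Set.range fun i : {i // k ≤ e i} => ⇑(hA.eigenvectorBasis i.1)) with hW
  have hWrank : Module.finrank ℝ W = m - (k : ℕ) := by
    rw [hW, finrank_span_eig hA, card_sub e (k ≤ ·), card_ge_fin]
  have hdisj : ∀ x, x ∈ V → x ∈ W → x = 0 := by
    intro x hxV hxW
    by_contra hx0
    obtain ⟨co, hd, hq⟩ := spec_decomp hA (fun i => k ≤ e i) x hxW
    have hqge : μ k * (x ⬝ᵥ x) ≤ x ⬝ᵥ A *ᵥ x := by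
      rw [hq, hd, Finset.mul_sum]
      refine Finset.sum_le_sum fun i _ => ?_
      have h1 : μ k ≤ hA.eigenvalues i.1 := by
        rw [← he]; exact hmono i.2
      exact mul_le_mul_of_nonneg_right h1 (sq_nonneg _)
    have h1 := hV x hxV hx0
    have h2 : c * (x ⬝ᵥ x) ≤ μ k * (x ⬝ᵥ x) :=
      mul_le_mul_of_nonneg_right hge (dot_self_pos hx0).le
    linarith
  have h := dim_count V W hdisj
  rw [hWrank, hcard] at h
  have hkm := k.2
  omega

lemma qM (n : ℕ) (N : Matrix (Fin n) (Fin n) ℝ) (a : Fin n → ℝ)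
    (x : Unit ⊕ Fin n → ℝ) :
    x ⬝ᵥ (Matrix.fromBlocks (1 : Matrix Unit Unit ℝ)
      (Matrix.of fun _ j => a j) (Matrix.of fun i _ => a i)
      (Matrix.vecMulVec a a - N)) *ᵥ x
    = (x (Sum.inl ()) + a ⬝ᵥ (x ∘ Sum.inr))^2 - (x ∘ Sum.inr) ⬝ᵥ N *ᵥ (x ∘ Sum.inr) := by
  rw [← Sum.elim_comp_inl_inr x, fromBlocks_mulVec, sumElim_dotProduct_sumElim]
  have huniv : ∀ f : Unit → ℝ, ∑ u : Unit, f u = f () := fun f => by simp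
  simp only [dotProduct, mulVec, Pi.add_apply, Function.comp_apply,
    vecMulVec_apply, of_apply, one_apply, Pi.sub_apply, Matrix.sub_apply, huniv, dotProduct]
  simp only [Sum.elim_inl, Sum.elim_inr, Function.comp_apply, if_pos rfl, mul_one,
    Finset.sum_sub_distrib, Finset.mul_sum, Finset.sum_mul, mul_add, add_mul, sub_mul, mul_sub]
  ring_nf
  simp only [if_pos trivial, mul_one]
  have h1 : ∑ j, x (Sum.inr j) * a j * x (Sum.inl ())
      = x (Sum.inl ()) * ∑ j, a j * x (Sum.inr j) := by
    rw [Finset.mul_sum]; exact Finset.sum_congr rfl fun j _ => by ring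
  have h2 : ∑ j, x (Sum.inl ()) * a j * x (Sum.inr j)
      = x (Sum.inl ()) * ∑ j, a j * x (Sum.inr j) := by
    rw [Finset.mul_sum]; exact Finset.sum_congr rfl fun j _ => by ring
  have h3 : ∑ i, ∑ j, (x (Sum.inr i) * a i * a j * x (Sum.inr j))
      = (∑ j, a j * x (Sum.inr j))^2 := by
    rw [pow_two, Finset.sum_mul_sum]
    exact Finset.sum_congr rfl fun i _ => Finset.sum_congr rfl fun j _ => by ring
  have h1' : ∑ j, x (Sum.inl ()) * x (Sum.inr j) * a j
      = x (Sum.inl ()) * ∑ j, a j * x (Sum.inr j) := by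
    rw [Finset.mul_sum]; exact Finset.sum_congr rfl fun j _ => by ring
  rw [Finset.sum_sub_distrib, Finset.sum_add_distrib, h1', h2, h3]
  ring

noncomputable def Lmap (n : ℕ) (a : Fin n → ℝ) : (Fin n → ℝ) →ₗ[ℝ] (Unit ⊕ Fin n → ℝ) where
  toFun y := Sum.elim (fun _ => -(a ⬝ᵥ y)) y
  map_add' y z := by
    funext u
    cases u with
    | inl u => simp [dotProduct_add]; ring
    | inr j => simp
  map_smul' t y := by
    funext u
    cases u with
    | inl u => simp [dotProduct_smul]
    | inr j => simp

lemma Lmap_inl (n : ℕ) (a : Fin n → ℝ) (y : Fin n → ℝ) :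
    (Lmap n a y) (Sum.inl ()) = -(a ⬝ᵥ y) := rfl

lemma Lmap_inr (n : ℕ) (a : Fin n → ℝ) (y : Fin n → ℝ) :
    (Lmap n a y) ∘ Sum.inr = y := rfl

lemma Lmap_inj (n : ℕ) (a : Fin n → ℝ) : Function.Injective (Lmap n a) := by
  intro y z h
  have h2 := congrArg (fun w => w ∘ Sum.inr) h
  simpa [Lmap_inr] using h2

lemma Lmap_dot (n : ℕ) (a : Fin n → ℝ) (y : Fin n → ℝ) :
    (Lmap n a y) ⬝ᵥ (Lmap n a y) = (a ⬝ᵥ y)^2 + y ⬝ᵥ y := by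
  show Sum.elim _ y ⬝ᵥ Sum.elim _ y = _
  rw [sumElim_dotProduct_sumElim]
  congr 1
  simp [dotProduct]
  ring

end Aux

/-- for `N` symmetric positive definite `(d-1)×(d-1)` (here `n×n`) and
`a ∈ ℝ^{d-1}`, the symmetric matrix `M = [[1, a'],[a, aa' - N]]` has exactly one positive
eigenvalue and `d-1` negative eigenvalues, its largest eigenvalue is at least `1`, and the
interlacing inequalities `λ_{i+1}(M) ≥ -λ_{d-i}(N)` hold, so that
`-λ_{d-i+1}(M)/λ_d(M) ≤ λ_i(N)` (eigenvalues in nondecreasing order). -/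
theorem stmt19 (n : ℕ) (N : Matrix (Fin n) (Fin n) ℝ) (hN : N.PosDef)
    (a : Fin n → ℝ)
    (M : Matrix (Unit ⊕ Fin n) (Unit ⊕ Fin n) ℝ)
    (hMdef : M = Matrix.fromBlocks (1 : Matrix Unit Unit ℝ)
      (Matrix.of fun _ j => a j) (Matrix.of fun i _ => a i)
      (Matrix.vecMulVec a a - N))
    (hM : M.IsHermitian)
    -- `μ` lists the eigenvalues of `M` in nondecreasing order
    (μ : Fin (n + 1) → ℝ) (hμmono : Monotone μ)
    (eM : (Unit ⊕ Fin n) ≃ Fin (n + 1)) (hμ : ∀ i, μ (eM i) = hM.eigenvalues i)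
    -- `ν` lists the eigenvalues of `N` in nondecreasing order
    (ν : Fin n → ℝ) (hνmono : Monotone ν)
    (eN : Fin n ≃ Fin n) (hν : ∀ i, ν (eN i) = hN.1.eigenvalues i) :
    (0 < μ ⟨n, by omega⟩) ∧
    (∀ i : Fin (n + 1), (i : ℕ) < n → μ i < 0) ∧
    (1 ≤ μ ⟨n, by omega⟩) ∧
    (∀ i : Fin n, -ν ⟨n - 1 - (i : ℕ), by have := i.isLt; omega⟩ ≤ μ i.succ) ∧
    (∀ i : Fin n, -μ ⟨n - (i : ℕ), by omega⟩ / μ ⟨n, by omega⟩ ≤ ν i) := by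
  have hcard : Fintype.card (Unit ⊕ Fin n) = n + 1 := by simp; omega
  have hνpos : ∀ k, 0 < ν k := by
    intro k
    have h := hν (eN.symm k)
    rw [Equiv.apply_symm_apply] at h
    rw [h]
    exact hN.eigenvalues_pos _
  -- claim 3
  have h3 : 1 ≤ μ ⟨n, by omega⟩ := by
    set u : Unit ⊕ Fin n → ℝ := Sum.elim (fun _ => 1) 0 with hu
    have hu0 : u ≠ 0 := by
      intro h
      have h2 := congrFun h (Sum.inl ())
      simp [hu] at h2
    refine eig_ge hM hcard μ hμmono eM hμ (Submodule.span ℝ {u}) 1 ?_ ⟨n, by omega⟩ ?_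
    · intro x hx
      rw [Submodule.mem_span_singleton] at hx
      obtain ⟨t, rfl⟩ := hx
      have hx1 : (t • u) (Sum.inl ()) = t := by simp [hu]
      have hx2 : (t • u) ∘ Sum.inr = 0 := by funext j; simp [hu]
      rw [hMdef, qM, hx1, hx2]
      have hdot : (t • u) ⬝ᵥ (t • u) = t * t := by
        simp only [hu, dotProduct, Fintype.sum_sum_type]
        simp
      rw [hdot]
      simp [pow_two]
    · rw [finrank_span_singleton hu0]
      show n + 1 ≤ 1 + n
      omega
  -- claim 2
  have h2 : ∀ i : Fin (n+1), (i : ℕ) < n → μ i < 0 := by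
    intro i hi
    have hr : Module.finrank ℝ (LinearMap.range (Lmap n a)) = n := by
      rw [LinearMap.finrank_range_of_inj (Lmap_inj n a)]
      simp
    have h := eig_lt hM hcard μ hμmono eM hμ (LinearMap.range (Lmap n a)) 0 ?_ i
      (by rw [hr]; exact hi)
    · simpa using h
    · intro x hx hx0
      obtain ⟨y, rfl⟩ := hx
      have hy0 : y ≠ 0 := fun h => hx0 (by rw [h]; exact map_zero _)
      rw [hMdef, qM, Lmap_inl, Lmap_inr]
      have hpos : 0 < y ⬝ᵥ N *ᵥ y := by
        have := hN.dotProduct_mulVec_pos hy0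
        simpa using this
      have hz : (-(a ⬝ᵥ y) + a ⬝ᵥ y) = 0 := by ring
      rw [hz, zero_mul]
      simpa using hpos
  -- claim 4
  have h4 : ∀ i : Fin n, -ν ⟨n - 1 - (i : ℕ), by have := i.isLt; omega⟩ ≤ μ i.succ := by
    intro i
    have hin : (i : ℕ) < n := i.2
    set j : Fin n := ⟨n - 1 - (i : ℕ), by omega⟩ with hj
    set Y := Submodule.span ℝ
      (Set.range fun l : {l // eN l ≤ j} => ⇑(hN.1.eigenvectorBasis l.1)) with hY
    have hYrank : Module.finrank ℝ Y = (j : ℕ) + 1 := by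
      rw [hY, finrank_span_eig hN.1, card_sub eN (· ≤ j), card_le_fin]
    set V := Y.map (Lmap n a) with hV
    have hVrank : Module.finrank ℝ V = (j : ℕ) + 1 := by
      rw [← hYrank, hV]
      exact (Submodule.equivMapOfInjective _ (Lmap_inj n a) Y).finrank_eq.symm
    refine eig_ge hM hcard μ hμmono eM hμ V (-ν j) ?_ i.succ ?_
    · intro x hx
      rw [hV, Submodule.mem_map] at hx
      obtain ⟨y, hyY, rfl⟩ := hx
      obtain ⟨c, hd, hq⟩ := spec_decomp hN.1 (fun l => eN l ≤ j) y hyY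
      rw [hMdef, qM, Lmap_inl, Lmap_inr, Lmap_dot]
      have hNy : y ⬝ᵥ N *ᵥ y ≤ ν j * (y ⬝ᵥ y) := by
        rw [hq, hd, Finset.mul_sum]
        refine Finset.sum_le_sum fun l _ => ?_
        have hle : hN.1.eigenvalues l.1 ≤ ν j := by
          rw [← hν]
          exact hνmono l.2
        exact mul_le_mul_of_nonneg_right hle (sq_nonneg _)
      have hz : (-(a ⬝ᵥ y) + a ⬝ᵥ y) = 0 := by ring
      rw [hz]
      have hν0 : 0 ≤ ν j := (hνpos j).le
      nlinarith [sq_nonneg (a ⬝ᵥ y), mul_nonneg hν0 (sq_nonneg (a ⬝ᵥ y))]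
    · rw [hVrank, Fin.val_succ]
      show n + 1 ≤ (n - 1 - (i : ℕ)) + 1 + ((i : ℕ) + 1)
      omega
  -- claim 5
  have h5 : ∀ i : Fin n, -μ ⟨n - (i : ℕ), by omega⟩ / μ ⟨n, by omega⟩ ≤ ν i := by
    intro i
    have hin : (i : ℕ) < n := i.2
    have h4' : -ν i ≤ μ ⟨n - (i : ℕ), by omega⟩ := by
      have h := h4 ⟨n - 1 - (i : ℕ), by omega⟩
      have e1 : (⟨n - 1 - ((⟨n - 1 - (i : ℕ), by omega⟩ : Fin n) : ℕ), by omega⟩ : Fin n)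
          = i := by
        ext; simp; omega
      have e2 : (⟨n - 1 - (i : ℕ), by omega⟩ : Fin n).succ
          = (⟨n - (i : ℕ), by omega⟩ : Fin (n+1)) := by
        ext; simp [Fin.val_succ]; omega
      rw [e1, e2] at h
      exact h
    have hP : (1 : ℝ) ≤ μ ⟨n, by omega⟩ := h3
    rcases le_or_gt (-μ ⟨n - (i : ℕ), by omega⟩) 0 with hs | hs
    · have hd : -μ ⟨n - (i : ℕ), by omega⟩ / μ ⟨n, by omega⟩ ≤ 0 :=
        div_nonpos_iff.mpr (Or.inr ⟨hs, by linarith⟩)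
      linarith [hνpos i]
    · have hd : -μ ⟨n - (i : ℕ), by omega⟩ / μ ⟨n, by omega⟩ ≤ -μ ⟨n - (i : ℕ), by omega⟩ :=
        div_le_self hs.le hP
      linarith
  exact ⟨by linarith, h2, h3, h4, h5⟩
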